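/- Let 0 < β < 1/6 and H > 0, and let {x_k}_{k≥1} be a sequence of nonnegative real numbers satisfying x_{k+1} ≤ (1 − 2β/k) x_k + H/k^{4/3} for all k ≥ 1. Then there exists a constant C > 0 (depending only on β, H, and x_1) such that x_k ≤ C · k^{−2β} for all k ≥ 1; that is, x_k = O(k^{−2β}). -/

import Mathlib

open Real

lemma auxA (a k : ℝ) (ha0 : 0 ≤ a) (ha1 : a ≤ 1) (hk : 1 ≤ k) :
    (1 - a / k) * k ^ (-a) ≤ (k + 1) ^ (-a) := by
  have hk0 : (0:ℝ) < k := lt_of_lt_of_le one_pos hk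
  have hs0 : (0:ℝ) < 1 + 1/k := by positivity
  have hbern : (1 + 1/k) ^ a ≤ 1 + a * (1/k) :=
    rpow_one_add_le_one_add_mul_self (le_trans (by norm_num : (-1:ℝ) ≤ 0) (by positivity)) ha0 ha1
  have hpos : 0 < (1 + 1/k) ^ a := Real.rpow_pos_of_pos hs0 a
  have hak : a / k ≤ 1 := by
    rw [div_le_one hk0]; linarith
  have key : (1 - a / k) * (1 + 1/k) ^ a ≤ 1 := by
    have h1 : 0 ≤ 1 - a / k := by linarith
    have h2 : (1 - a/k) * (1 + 1/k) ^ a ≤ (1 - a/k) * (1 + a * (1/k)) :=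
      mul_le_mul_of_nonneg_left hbern h1
    have h3 : a * (1/k) = a / k := by ring
    nlinarith [sq_nonneg (a/k)]
  have hmono : (1 - a/k) ≤ ((1+1/k)^a)⁻¹ := by
    rw [← one_div]
    exact (le_div_iff₀ hpos).mpr key
  have hb : k + 1 = k * (1 + 1/k) := by field_simp
  rw [hb, Real.mul_rpow hk0.le hs0.le, Real.rpow_neg hs0.le]
  calc (1 - a/k) * k ^ (-a) = k ^ (-a) * (1 - a/k) := by ring
    _ ≤ k ^ (-a) * ((1+1/k)^a)⁻¹ :=
        mul_le_mul_of_nonneg_left hmono (Real.rpow_nonneg hk0.le _)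

lemma auxB (k : ℝ) (hk : 1 ≤ k) :
    (k+1) ^ ((-1/3 : ℝ)) + (1/3) * (k+1) ^ ((-4/3 : ℝ)) ≤ k ^ ((-1/3 : ℝ)) := by
  have hk0 : (0:ℝ) < k := lt_of_lt_of_le one_pos hk
  have hk10 : (0:ℝ) < k + 1 := by linarith
  set u : ℝ := (k+1)⁻¹ with hu
  have hu0 : 0 < u := by positivity
  have hu2 : u ≤ 1/2 := by
    rw [hu]; rw [inv_le_comm₀ hk10 (by norm_num)]; linarith
  set t : ℝ := 1/k with ht
  have htu : (1+t)*(1-u) = 1 := by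
    rw [ht, hu]; field_simp; ring
  have hcube : (1 + u/3)^3 * (1 - u) ≤ 1 := by nlinarith [hu0.le, sq_nonneg u]
  have h1u : 0 < 1 - u := by linarith
  have h3 : (1 + u/3)^3 ≤ 1 + t := by nlinarith
  have hroot : 1 + u/3 ≤ (1+t) ^ ((1:ℝ)/3) := by
    have h0 : (0:ℝ) ≤ 1 + u/3 := by linarith
    have := Real.rpow_le_rpow (by positivity) h3 (by norm_num : (0:ℝ) ≤ 1/3)
    calc 1 + u/3 = (((1+u/3)^3 : ℝ)) ^ ((1:ℝ)/3) := by
          rw [← Real.rpow_natCast (1+u/3) 3, ← Real.rpow_mul h0]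
          norm_num
      _ ≤ (1+t) ^ ((1:ℝ)/3) := this
  -- multiply by (k+1)^(-1/3)
  have hp : (0:ℝ) < (k+1) ^ ((-1/3 : ℝ)) := Real.rpow_pos_of_pos hk10 _
  have hmul := mul_le_mul_of_nonneg_left hroot hp.le
  have heq1 : (k+1) ^ ((-1/3 : ℝ)) * ((1+t) ^ ((1:ℝ)/3)) = k ^ ((-1/3 : ℝ)) := by
    have h1 : (k+1) ^ ((-1/3 : ℝ)) = ((k+1)⁻¹) ^ ((1:ℝ)/3) := by
      rw [← Real.rpow_neg_one (k+1), ← Real.rpow_mul hk10.le]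
      norm_num
    have h2 : ((k+1)⁻¹) ^ ((1:ℝ)/3) * ((1+t) ^ ((1:ℝ)/3)) = ((k+1)⁻¹ * (1+t)) ^ ((1:ℝ)/3) :=
      (Real.mul_rpow (by positivity) (by positivity)).symm
    have h4 : (k+1)⁻¹ * (1+t) = k⁻¹ := by
      rw [ht]; field_simp
    have h5 : (k⁻¹ : ℝ) ^ ((1:ℝ)/3) = k ^ ((-1/3 : ℝ)) := by
      rw [← Real.rpow_neg_one k, ← Real.rpow_mul hk0.le]
      norm_num
    rw [h1, h2, h4, h5]
  have heq2 : (k+1) ^ ((-1/3 : ℝ)) * (1 + u/3) =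
      (k+1) ^ ((-1/3 : ℝ)) + (1/3) * (k+1) ^ ((-4/3 : ℝ)) := by
    have h6 : (k+1) ^ ((-1/3 : ℝ)) * u = (k+1) ^ ((-4/3 : ℝ)) := by
      rw [hu, ← Real.rpow_neg_one (k+1), ← Real.rpow_add hk10]
      norm_num
    have : (k+1) ^ ((-1/3 : ℝ)) * (1 + u/3)
        = (k+1) ^ ((-1/3 : ℝ)) + (1/3) * ((k+1) ^ ((-1/3 : ℝ)) * u) := by ring
    rw [this, h6]
  rw [heq1, heq2] at hmul
  exact hmul

set_option maxHeartbeats 1000000 in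
/-- The rate recursion for the case `0 < β < 1/6`. -/
theorem stmt_2 (x : ℕ → ℝ) (β H : ℝ)
    (hβ0 : 0 < β) (hβ : β < 1 / 6) (hH : 0 < H)
    (hx : ∀ k : ℕ, 1 ≤ k → 0 ≤ x k)
    (hrec : ∀ k : ℕ, 1 ≤ k →
      x (k + 1) ≤ (1 - 2 * β / (k : ℝ)) * x k + H / (k : ℝ) ^ ((4 : ℝ) / 3)) :
    ∃ C : ℝ, 0 < C ∧ ∀ k : ℕ, 1 ≤ k → x k ≤ C * (k : ℝ) ^ (-(2 * β)) := by
  have ha0 : (0:ℝ) ≤ 2*β := by linarith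
  have ha1 : (2*β:ℝ) ≤ 1 := by linarith
  have hc : (0:ℝ) < 1/6 - β := by linarith
  have h6p : (0:ℝ) < 6*β+1 := by linarith
  set B := H / (1/6 - β) with hBdef
  have hB0 : 0 < B := div_pos hH hc
  obtain ⟨K₀, hK₀⟩ := exists_nat_ge (3 * (6*β+1)/(1-6*β))
  set K := max K₀ 1 with hKdef
  have hK1 : 1 ≤ K := le_max_right _ _
  have hK0' : (1:ℝ) ≤ (K:ℝ) := by exact_mod_cast hK1
  have hKpos : (0:ℝ) < (K:ℝ) := lt_of_lt_of_le one_pos hK0'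
  have hthr : ∀ k:ℕ, K ≤ k → (1:ℝ) + 3/(k:ℝ) ≤ 2/(6*β+1) := by
    intro k hk
    have hkK0 : (K₀:ℝ) ≤ (k:ℝ) := by
      exact_mod_cast le_trans (le_max_left K₀ 1) hk
    have hk1 : (1:ℝ) ≤ (k:ℝ) := le_trans hK0' (by exact_mod_cast hk)
    have hkpos : (0:ℝ) < (k:ℝ) := lt_of_lt_of_le one_pos hk1
    have hge : 3*(6*β+1)/(1-6*β) ≤ (k:ℝ) := hK₀.trans hkK0
    have h16 : (0:ℝ) < 1-6*β := by linarith
    rw [div_le_iff₀ h16] at hge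
    have h1 : 3/(k:ℝ) ≤ (1-6*β)/(6*β+1) := by
      rw [div_le_div_iff₀ hkpos h6p]; nlinarith
    have h2 : 2/(6*β+1) = 1 + (1-6*β)/(6*β+1) := by field_simp; ring
    linarith
  set A := (x K + B * (K:ℝ) ^ ((-1/3 : ℝ))) * (K:ℝ) ^ (2*β) with hAdef
  have hxK0 : 0 ≤ x K := hx K hK1
  have hA0 : 0 ≤ A := by
    apply mul_nonneg
    · exact add_nonneg hxK0 (mul_nonneg hB0.le (Real.rpow_nonneg hKpos.le _))
    · exact Real.rpow_nonneg hKpos.le _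
  have hKcan : (K:ℝ)^(2*β) * (K:ℝ)^(-(2*β)) = 1 := by
    rw [← Real.rpow_add hKpos]; simp
  have main : ∀ k, K ≤ k → x k ≤ A * (k:ℝ)^(-(2*β)) - B * (k:ℝ)^((-1/3:ℝ)) := by
    intro k hk
    induction k, hk using Nat.le_induction with
    | base =>
      have hbase : A * (K:ℝ)^(-(2*β)) = x K + B * (K:ℝ)^((-1/3:ℝ)) := by
        calc A * (K:ℝ)^(-(2*β))
            = (x K + B * (K:ℝ)^((-1/3:ℝ))) * ((K:ℝ)^(2*β) * (K:ℝ)^(-(2*β))) := by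
              rw [hAdef]; ring
          _ = x K + B * (K:ℝ)^((-1/3:ℝ)) := by rw [hKcan, mul_one]
      linarith
    | succ k hkK ih =>
      have hk1 : 1 ≤ k := le_trans hK1 hkK
      have hk1r : (1:ℝ) ≤ (k:ℝ) := by exact_mod_cast hk1
      have hk0 : (0:ℝ) < (k:ℝ) := lt_of_lt_of_le one_pos hk1r
      have hcast : ((k+1:ℕ):ℝ) = (k:ℝ)+1 := by push_cast; ring
      rw [hcast]
      have hcoef : 0 ≤ 1 - 2*β/(k:ℝ) := by
        have := div_le_self ha0 hk1r
        linarith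
      have hH4 : H / (k:ℝ)^((4:ℝ)/3) = H * (k:ℝ)^((-4/3:ℝ)) := by
        rw [div_eq_mul_inv, ← Real.rpow_neg hk0.le]
        norm_num
      have hstep1 : x (k+1) ≤ (1-2*β/(k:ℝ))*(A * (k:ℝ)^(-(2*β)) - B*(k:ℝ)^((-1/3:ℝ)))
          + H*(k:ℝ)^((-4/3:ℝ)) := by
        have h := hrec k hk1
        rw [hH4] at h
        have h2 := mul_le_mul_of_nonneg_left ih hcoef
        linarith
      have hApart : (1-2*β/(k:ℝ)) * (k:ℝ)^(-(2*β)) ≤ ((k:ℝ)+1)^(-(2*β)) :=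
        auxA (2*β) k ha0 ha1 hk1r
      have hsplit : (1-2*β/(k:ℝ)) * (k:ℝ)^((-1/3:ℝ))
          = (k:ℝ)^((-1/3:ℝ)) - 2*β*(k:ℝ)^((-4/3:ℝ)) := by
        have h6 : (k:ℝ)^((-1/3:ℝ)) * (k:ℝ)⁻¹ = (k:ℝ)^((-4/3:ℝ)) := by
          rw [← Real.rpow_neg_one (k:ℝ), ← Real.rpow_add hk0]; norm_num
        calc (1-2*β/(k:ℝ)) * (k:ℝ)^((-1/3:ℝ))
            = (k:ℝ)^((-1/3:ℝ)) - 2*β*((k:ℝ)^((-1/3:ℝ)) * (k:ℝ)⁻¹) := by ring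
          _ = (k:ℝ)^((-1/3:ℝ)) - 2*β*(k:ℝ)^((-4/3:ℝ)) := by rw [h6]
      have hgap := auxB k hk1r
      -- hC : (β+1/6) k^{-4/3} ≤ (1/3)(k+1)^{-4/3}
      have hC : (β + 1/6) * (k:ℝ)^((-4/3:ℝ)) ≤ (1/3) * ((k:ℝ)+1)^((-4/3:ℝ)) := by
        have hbsplit : (k:ℝ)+1 = (k:ℝ) * (1+1/(k:ℝ)) := by field_simp
        have h43 : ((k:ℝ)+1)^((4:ℝ)/3) ≤ (2/(6*β+1)) * (k:ℝ)^((4:ℝ)/3) := by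
          rw [hbsplit, Real.mul_rpow hk0.le (by positivity)]
          have ht0 : (0:ℝ) < 1/(k:ℝ) := by positivity
          have ht1 : 1/(k:ℝ) ≤ 1 := by
            rw [div_le_one hk0]; linarith
          have h1 : (1+1/(k:ℝ))^((4:ℝ)/3) ≤ (1+1/(k:ℝ))^((2:ℝ)) :=
            Real.rpow_le_rpow_of_exponent_le (by linarith) (by norm_num)
          have h2 : (1+1/(k:ℝ))^((2:ℝ)) = (1+1/(k:ℝ))^(2:ℕ) := by
            rw [← Real.rpow_natCast (1+1/(k:ℝ)) 2]; norm_num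
          have h3 : (1+1/(k:ℝ))^(2:ℕ) ≤ 1 + 3/(k:ℝ) := by
            have he : (1+1/(k:ℝ))^(2:ℕ) = 1 + 2*(1/(k:ℝ)) + (1/(k:ℝ))*(1/(k:ℝ)) := by ring
            have h33 : (3:ℝ)/(k:ℝ) = 3*(1/(k:ℝ)) := by ring
            have hsq : (1/(k:ℝ))*(1/(k:ℝ)) ≤ 1*(1/(k:ℝ)) := mul_le_mul_of_nonneg_right ht1 ht0.le
            rw [he, h33]; linarith
          have h4 : (1+1/(k:ℝ))^((4:ℝ)/3) ≤ 2/(6*β+1) := by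
            have := hthr k hkK
            rw [h2] at h1
            linarith
          calc (k:ℝ)^((4:ℝ)/3) * (1+1/(k:ℝ))^((4:ℝ)/3)
              ≤ (k:ℝ)^((4:ℝ)/3) * (2/(6*β+1)) :=
                mul_le_mul_of_nonneg_left h4 (Real.rpow_nonneg hk0.le _)
            _ = (2/(6*β+1)) * (k:ℝ)^((4:ℝ)/3) := by ring
        have hpos1 : (0:ℝ) < ((k:ℝ)+1)^((4:ℝ)/3) := Real.rpow_pos_of_pos (by linarith) _
        have hinv : ((2/(6*β+1)) * (k:ℝ)^((4:ℝ)/3))⁻¹ ≤ (((k:ℝ)+1)^((4:ℝ)/3))⁻¹ :=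
          inv_anti₀ hpos1 h43
        have e0 : (k:ℝ)^((-4/3:ℝ)) = ((k:ℝ)^((4:ℝ)/3))⁻¹ := by
          rw [← Real.rpow_neg hk0.le]; norm_num
        have e2 : (((k:ℝ)+1)^((4:ℝ)/3))⁻¹ = ((k:ℝ)+1)^((-4/3:ℝ)) := by
          rw [← Real.rpow_neg (by linarith : (0:ℝ) ≤ (k:ℝ)+1)]; norm_num
        have e1 : ((2/(6*β+1)) * (k:ℝ)^((4:ℝ)/3))⁻¹ = ((6*β+1)/2) * (k:ℝ)^((-4/3:ℝ)) := by
          rw [mul_inv, inv_div, e0]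
        rw [e1, e2] at hinv
        have hrw : (β + 1/6) * (k:ℝ)^((-4/3:ℝ))
            = (1/3) * (((6*β+1)/2) * (k:ℝ)^((-4/3:ℝ))) := by ring
        rw [hrw]
        exact mul_le_mul_of_nonneg_left hinv (by norm_num)
      have hBpart : H * (k:ℝ)^((-4/3:ℝ))
          ≤ B * ((1-2*β/(k:ℝ))*(k:ℝ)^((-1/3:ℝ)) - ((k:ℝ)+1)^((-1/3:ℝ))) := by
        rw [hsplit]
        have hb1 : (1/6 - β) * (k:ℝ)^((-4/3:ℝ))
            ≤ (k:ℝ)^((-1/3:ℝ)) - 2*β*(k:ℝ)^((-4/3:ℝ)) - ((k:ℝ)+1)^((-1/3:ℝ)) := by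
          linarith
        have hBc : B * (1/6 - β) = H := by
          rw [hBdef]; exact div_mul_cancel₀ H (ne_of_gt hc)
        calc H * (k:ℝ)^((-4/3:ℝ)) = B * ((1/6-β) * (k:ℝ)^((-4/3:ℝ))) := by
              rw [← hBc]; ring
          _ ≤ B * ((k:ℝ)^((-1/3:ℝ)) - 2*β*(k:ℝ)^((-4/3:ℝ)) - ((k:ℝ)+1)^((-1/3:ℝ))) :=
              mul_le_mul_of_nonneg_left hb1 hB0.le
      have t1 := mul_le_mul_of_nonneg_left hApart hA0
      rw [mul_sub] at hBpart
      have hexp : (1-2*β/(k:ℝ))*(A * (k:ℝ)^(-(2*β)) - B*(k:ℝ)^((-1/3:ℝ))) + H*(k:ℝ)^((-4/3:ℝ))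
          = A * ((1-2*β/(k:ℝ)) * (k:ℝ)^(-(2*β)))
            - B*((1-2*β/(k:ℝ))*(k:ℝ)^((-1/3:ℝ))) + H*(k:ℝ)^((-4/3:ℝ)) := by ring
      rw [hexp] at hstep1
      linarith
  -- finale
  set M := ∑ i ∈ Finset.Icc 1 K, x i with hMdef
  have hM0 : 0 ≤ M := Finset.sum_nonneg fun i hi => hx i (Finset.mem_Icc.mp hi).1
  set C := max A (M * (K:ℝ)^(2*β)) + 1 with hCdef
  have hmax0 : 0 ≤ max A (M * (K:ℝ)^(2*β)) := le_trans hA0 (le_max_left _ _)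
  refine ⟨C, by linarith, ?_⟩
  intro k hk
  have hk1r : (1:ℝ) ≤ (k:ℝ) := by exact_mod_cast hk
  have hkr0 : (0:ℝ) < (k:ℝ) := lt_of_lt_of_le one_pos hk1r
  have hpw : 0 < (k:ℝ)^(-(2*β)) := Real.rpow_pos_of_pos hkr0 _
  by_cases hkK : K ≤ k
  · have hmain := main k hkK
    have hBk : 0 ≤ B * (k:ℝ)^((-1/3:ℝ)) :=
      mul_nonneg hB0.le (Real.rpow_nonneg hkr0.le _)
    have h1 : x k ≤ A * (k:ℝ)^(-(2*β)) := by linarith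
    have h2 : A ≤ C := by
      have := le_max_left A (M * (K:ℝ)^(2*β)); linarith
    calc x k ≤ A * (k:ℝ)^(-(2*β)) := h1
      _ ≤ C * (k:ℝ)^(-(2*β)) := mul_le_mul_of_nonneg_right h2 hpw.le
  · push_neg at hkK
    have hmem : k ∈ Finset.Icc 1 K := Finset.mem_Icc.mpr ⟨hk, hkK.le⟩
    have hxkM : x k ≤ M :=
      Finset.single_le_sum (f := x) (fun i hi => hx i (Finset.mem_Icc.mp hi).1) hmem
    have hkK' : (k:ℝ) ≤ (K:ℝ) := by exact_mod_cast hkK.le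
    have hmono : (K:ℝ)^(-(2*β)) ≤ (k:ℝ)^(-(2*β)) := by
      have h := Real.rpow_le_rpow hkr0.le hkK' ha0
      rw [Real.rpow_neg hkr0.le, Real.rpow_neg hKpos.le]
      exact inv_anti₀ (Real.rpow_pos_of_pos hkr0 _) h
    calc x k ≤ M := hxkM
      _ = M * ((K:ℝ)^(2*β) * (K:ℝ)^(-(2*β))) := by rw [hKcan, mul_one]
      _ ≤ M * ((K:ℝ)^(2*β) * (k:ℝ)^(-(2*β))) := by
          apply mul_le_mul_of_nonneg_left _ hM0
          exact mul_le_mul_of_nonneg_left hmono (Real.rpow_nonneg hKpos.le _)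
      _ = (M * (K:ℝ)^(2*β)) * (k:ℝ)^(-(2*β)) := by ring
      _ ≤ C * (k:ℝ)^(-(2*β)) := by
          apply mul_le_mul_of_nonneg_right _ hpw.le
          have := le_max_right A (M * (K:ℝ)^(2*β)); linarith
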